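/- Let s ∈ ℂ with Re(s) > 0, let R > 0, let L < L* be real numbers, and let σ : [L, L*] → ℝ be continuous with σ ≥ 0 on [L, L*] and σ > 0 on the open interval (L, L*). Define F : [L, L*] → ℝ by F(x) = |exp(−R√(s²+1) ∫_L^x σ(ρ) dρ)|, where √ is the principal branch of the complex square root. Then F(L) = 1 and F is strictly decreasing on [L, L*]; i.e., the PML-II damping factor strictly attenuates the modal solution throughout the absorbing layer. -/

import Mathlib

open MeasureTheory

lemma re_sqrt_pos_of_re_pos {s : ℂ} (hs : 0 < s.re) :
    0 < ((s ^ 2 + 1) ^ (1/2 : ℂ)).re := by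
  set z : ℂ := s ^ 2 + 1 with hz
  have him : z.im = 0 → 0 < z.re := by
    intro h
    have hb : s.im = 0 := by
      have h' : s.re * s.im + s.im * s.re = 0 := by
        simpa [hz, Complex.add_im, Complex.mul_im, pow_two] using h
      have h2 : s.re * s.im = 0 := by linarith
      rcases mul_eq_zero.mp h2 with h3 | h3
      · exact absurd h3 hs.ne'
      · exact h3
    have : z.re = s.re ^ 2 + 1 := by
      simp [hz, pow_two, Complex.mul_re, Complex.add_re, hb]
    rw [this]; positivity
  have hz0 : z ≠ 0 := by
    intro h
    have : z.im = 0 := by rw [h]; simp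
    have := him this
    rw [h] at this; simp at this
  have harg_ne : z.arg ≠ Real.pi := by
    intro h
    rw [Complex.arg_eq_pi_iff] at h
    exact absurd (him h.2) (not_lt.mpr h.1.le)
  rw [Complex.cpow_def_of_ne_zero hz0, Complex.exp_re]
  apply mul_pos (Real.exp_pos _)
  have h1 : (Complex.log z * (1/2 : ℂ)).im = z.arg / 2 := by
    simp [Complex.mul_im, Complex.log_im]
    ring
  rw [h1]
  apply Real.cos_pos_of_mem_Ioo
  constructor
  · have := Complex.neg_pi_lt_arg z
    linarith
  · have := lt_of_le_of_ne (Complex.arg_le_pi z) harg_ne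
    linarith

/-- The PML-II damping factor `F(x) = |exp(−R√(s²+1)∫_L^x σ)|` equals `1` at the interface
`x = L` and is strictly decreasing across the absorbing layer `[L, L*]`. -/
theorem pml2_damping_strictly_decreasing (s : ℂ) (hs : 0 < s.re) (R : ℝ) (hR : 0 < R)
    (L Lstar : ℝ) (hLL : L < Lstar)
    (σ : ℝ → ℝ) (hσcont : ContinuousOn σ (Set.Icc L Lstar))
    (hσnonneg : ∀ x ∈ Set.Icc L Lstar, 0 ≤ σ x)
    (hσpos : ∀ x ∈ Set.Ioo L Lstar, 0 < σ x) :
    (‖Complex.exp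
        (-(R : ℂ) * (s ^ 2 + 1) ^ (1/2 : ℂ) * ((∫ ρ in L..L, σ ρ : ℝ) : ℂ))‖ = 1) ∧
      StrictAntiOn (fun x : ℝ =>
          ‖Complex.exp
            (-(R : ℂ) * (s ^ 2 + 1) ^ (1/2 : ℂ) * ((∫ ρ in L..x, σ ρ : ℝ) : ℂ))‖)
        (Set.Icc L Lstar) := by
  set c : ℂ := (s ^ 2 + 1) ^ (1/2 : ℂ) with hc
  have hcre : 0 < c.re := re_sqrt_pos_of_re_pos hs
  have habs : ∀ t : ℝ, ‖Complex.exp (-(R : ℂ) * c * (t : ℂ))‖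
      = Real.exp (-(R * c.re * t)) := by
    intro t
    rw [Complex.norm_exp]
    congr 1
    simp only [Complex.mul_re, Complex.mul_im, Complex.neg_re, Complex.neg_im,
      Complex.ofReal_re, Complex.ofReal_im]
    ring
  constructor
  · rw [intervalIntegral.integral_same]
    simp
  · intro x hx y hy hxy
    have hInt : ∀ a b : ℝ, a ∈ Set.Icc L Lstar → b ∈ Set.Icc L Lstar →
        IntervalIntegrable σ volume a b := by
      intro a b ha hb
      apply ContinuousOn.intervalIntegrable
      apply hσcont.mono
      rw [← Set.uIcc_of_le hLL.le, Set.uIcc_subset_uIcc_iff_mem]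
      exact ⟨Set.mem_uIcc_of_le ha.1 ha.2, Set.mem_uIcc_of_le hb.1 hb.2⟩
    have hsum : (∫ ρ in L..x, σ ρ) + (∫ ρ in x..y, σ ρ) = ∫ ρ in L..y, σ ρ :=
      intervalIntegral.integral_add_adjacent_intervals
        (hInt L x (Set.left_mem_Icc.mpr hLL.le) hx) (hInt x y hx hy)
    have hmid : 0 < ∫ ρ in x..y, σ ρ := by
      apply intervalIntegral.intervalIntegral_pos_of_pos_on (hInt x y hx hy) _ hxy
      intro t ht
      exact hσpos t ⟨lt_of_le_of_lt hx.1 ht.1, lt_of_lt_of_le ht.2 hy.2⟩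
    have hlt : (∫ ρ in L..x, σ ρ) < ∫ ρ in L..y, σ ρ := by linarith
    simp only [habs]
    apply Real.exp_lt_exp.mpr
    have : 0 < R * c.re := mul_pos hR hcre
    nlinarith
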